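/- Let F be a cellular automaton on A^ℤ and μ a Borel probability measure on A^ℤ that is invariant under both the shift σ and F, and ergodic for σ. If the system (A^ℤ, σ, μ) has discrete spectrum (the closed linear span in L²(μ) of the eigenfunctions of the Koopman operator g ↦ g∘σ is all of L²(μ)), then (A^ℤ, F, μ) also has discrete spectrum. -/

import Mathlib

open MeasureTheory Function Set
open scoped Classical ENNReal

/-- The configuration space of a one-dimensional cellular automaton over the alphabet `A`. -/
abbrev Config (A : Type*) := ℤ → A

/-- The shift map `σ`, defined by `σ(x)_i = x_{i+1}`. -/
def shift {A : Type*} (x : Config A) : Config A := fun i => x (i + 1)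

/-- The standard metric `d(x,y) = 2^{-n}` where
`n = min { i ≥ 0 : x_i ≠ y_i or x_{-i} ≠ y_{-i} }`, inducing the product topology. -/
noncomputable def cdist {A : Type*} (x y : Config A) : ℝ :=
  if x = y then 0
  else (2 : ℝ) ^ (-((sInf {n : ℕ | x (n : ℤ) ≠ y (n : ℤ) ∨ x (-(n : ℤ)) ≠ y (-(n : ℤ))} : ℕ) : ℤ))

/-- `F` has radius `r`: there is a local rule `f : A^{2r+1} → A` with
`F(x)_i = f(x_{i-r}, ..., x_{i+r})`. -/
def HasRadius {A : Type*} (F : Config A → Config A) (r : ℕ) : Prop :=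
  ∃ f : (Fin (2 * r + 1) → A) → A, ∀ (x : Config A) (i : ℤ),
    F x i = f (fun j => x (i - (r : ℤ) + (j : ℤ)))

/-- A map on `A^ℤ` is equicontinuous if the family of its iterates is uniformly
equicontinuous. -/
def EquicontMap {A : Type*} (F : Config A → Config A) : Prop :=
  ∀ ε > (0 : ℝ), ∃ δ > (0 : ℝ), ∀ x y : Config A, cdist x y < δ →
    ∀ n : ℕ, cdist (F^[n] x) (F^[n] y) < ε

/-- `x` is an equicontinuous point of `F`. -/
def IsEquicontPt {A : Type*} (F : Config A → Config A) (x : Config A) : Prop :=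
  ∀ ε > (0 : ℝ), ∃ δ > (0 : ℝ), ∀ y : Config A, cdist x y < δ →
    ∀ n : ℕ, cdist (F^[n] x) (F^[n] y) < ε

/-- `F` is sensitive to initial conditions. -/
def Sensitive {A : Type*} (F : Config A → Config A) : Prop :=
  ∃ ε > (0 : ℝ), ∀ x : Config A, ∀ δ > (0 : ℝ), ∃ y : Config A,
    cdist x y < δ ∧ ∃ n : ℕ, ε ≤ cdist (F^[n] x) (F^[n] y)

/-- `w : A^L` is an `s`-blocking word for `F`. -/
def IsBlockingWord {A : Type*} (F : Config A → Config A) (s L : ℕ) (w : Fin L → A) : Prop :=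
  s ≤ L ∧ ∃ p : ℕ, p + s ≤ L ∧ ∀ x y : Config A,
    (∀ j : Fin L, x (j : ℤ) = w j) → (∀ j : Fin L, y (j : ℤ) = w j) →
    ∀ n : ℕ, ∀ k : ℤ, (p : ℤ) ≤ k → k ≤ (p : ℤ) + (s : ℤ) →
      F^[n] x k = F^[n] y k

/-- The cylinder `[x(-n,n)]` of configurations agreeing with `x` on coordinates `-n, ..., n`. -/
def cyl {A : Type*} (x : Config A) (n : ℕ) : Set (Config A) :=
  {y | ∀ j : ℤ, -(n : ℤ) ≤ j → j ≤ (n : ℤ) → y j = x j}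

/-- The set `B_{[i₁,i₂]}(x) = {y : ∀ j ≥ 0, F^j(y)(i₁,i₂) = F^j(x)(i₁,i₂)}`. -/
def Bset {A : Type*} (F : Config A → Config A) (i₁ i₂ : ℤ) (x : Config A) : Set (Config A) :=
  {y | ∀ k : ℕ, ∀ j : ℤ, i₁ ≤ j → j ≤ i₂ → F^[k] y j = F^[k] x j}

/-- `ν` is the uniform Bernoulli measure: every cylinder determined by coordinates in a
finite set `s` has measure `(1/|A|)^{|s|}`. -/
def IsUniformBernoulli {A : Type*} [Fintype A] [MeasurableSpace A]
    (ν : Measure (Config A)) : Prop :=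
  ∀ (s : Finset ℤ) (u : ℤ → A),
    ν {x : Config A | ∀ i ∈ s, x i = u i} = ((Fintype.card A : ℝ≥0∞))⁻¹ ^ s.card

/-- `x` is a `ν`-equicontinuous point of `F` (Gilman). -/
def NuEquicontPt {A : Type*} [MeasurableSpace A] (F : Config A → Config A)
    (ν : Measure (Config A)) (x : Config A) : Prop :=
  ∀ m : ℕ, 0 < m → Filter.Tendsto
    (fun n : ℕ => ν (cyl x n ∩ Bset F (-(m : ℤ)) (m : ℤ) x) / ν (cyl x n))
    Filter.atTop (nhds 1)

/-- The measure-preserving system given by `T` on `(X, μ)` has discrete spectrum: the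
closed linear span in `L²(μ)` of the eigenfunctions of the Koopman operator `g ↦ g ∘ T`
is all of `L²(μ)`. -/
def HasDiscreteSpectrum {X : Type*} [MeasurableSpace X] (T : X → X)
    (μ : MeasureTheory.Measure X) : Prop :=
  (Submodule.span ℂ {g : MeasureTheory.Lp ℂ 2 μ | g ≠ 0 ∧ ∃ c : ℂ,
      ∀ᵐ z ∂μ, (g : X → ℂ) (T z) = c * (g : X → ℂ) z}).topologicalClosure = ⊤

/-- **Pivato.** If `μ` is invariant under both `σ` and a cellular automaton
`F` and is `σ`-ergodic, and `(A^ℤ, σ, μ)` has discrete spectrum, then `(A^ℤ, F, μ)` has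
discrete spectrum. -/
theorem discrete_spectrum_of_shift_implies_discrete_spectrum_of_CA
    {A : Type*} [Fintype A] [MeasurableSpace A]
    [TopologicalSpace A] [DiscreteTopology A]
    (F : Config A → Config A) (hFcont : Continuous F)
    (hFshift : F ∘ shift = shift ∘ F)
    (μ : MeasureTheory.Measure (Config A)) [MeasureTheory.IsProbabilityMeasure μ]
    (hσerg : Ergodic shift μ) (hFmp : MeasureTheory.MeasurePreserving F μ μ)
    (hσds : HasDiscreteSpectrum shift μ) :
    HasDiscreteSpectrum F μ := by
  -- Every eigenfunction of the shift is an eigenfunction of `F`, since the Koopman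
  -- operators commute and eigenvalues of an ergodic transformation are simple.
  have hsub : {g : MeasureTheory.Lp ℂ 2 μ | g ≠ 0 ∧ ∃ c : ℂ,
      ∀ᵐ z ∂μ, (g : Config A → ℂ) (shift z) = c * (g : Config A → ℂ) z} ⊆
      {g : MeasureTheory.Lp ℂ 2 μ | g ≠ 0 ∧ ∃ c : ℂ,
      ∀ᵐ z ∂μ, (g : Config A → ℂ) (F z) = c * (g : Config A → ℂ) z} := by
    rintro g ⟨hg0, c, hc⟩
    refine ⟨hg0, ?_⟩
    have gm : AEStronglyMeasurable (g : Config A → ℂ) μ := MeasureTheory.Lp.aestronglyMeasurable g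
    have hgne : ¬ ((g : Config A → ℂ) =ᵐ[μ] 0) := by
      intro h
      exact hg0 (MeasureTheory.Lp.eq_zero_iff_ae_eq_zero.2 h)
    -- `c ≠ 0`
    have hcne : c ≠ 0 := by
      rintro rfl
      have h1 : (fun z => (g : Config A → ℂ) (shift z)) =ᵐ[μ] (0 : Config A → ℂ) := by
        filter_upwards [hc] with z hz using by simpa using hz
      have h2 : eLpNorm (fun z => (g : Config A → ℂ) (shift z)) 2 μ
          = eLpNorm (g : Config A → ℂ) 2 μ :=
        eLpNorm_comp_measurePreserving gm hσerg.toMeasurePreserving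
      rw [eLpNorm_congr_ae h1, eLpNorm_zero] at h2
      have : (g : Config A → ℂ) =ᵐ[μ] 0 :=
        (eLpNorm_eq_zero_iff gm (by norm_num)).1 h2.symm
      exact hgne this
    -- the zero set of `g` is a.e. shift-invariant, so `g ≠ 0` a.e.
    have hgnz : ∀ᵐ z ∂μ, (g : Config A → ℂ) z ≠ 0 := by
      have hsm : NullMeasurableSet {z | (g : Config A → ℂ) z = 0} μ := by
        have := gm.aemeasurable.nullMeasurable (MeasurableSet.singleton (0 : ℂ))
        simpa [Set.preimage] using this
      have hinv : shift ⁻¹' {z | (g : Config A → ℂ) z = 0} =ᵐ[μ]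
          {z | (g : Config A → ℂ) z = 0} := by
        rw [Filter.eventuallyEq_set]
        filter_upwards [hc] with z hz
        simp only [Set.mem_preimage, Set.mem_setOf_eq, hz]
        constructor
        · intro h; exact (mul_eq_zero.1 h).resolve_left hcne
        · intro h; simp [h]
      rcases hσerg.quasiErgodic.ae_mem_or_ae_notMem₀ hsm hinv with h | h
      · exact absurd (by filter_upwards [h] with z hz using hz) hgne
      · filter_upwards [h] with z hz using hz
    -- the ratio `g ∘ F / g` is a.e. shift-invariant, hence a.e. constant
    set ψ : Config A → ℂ := fun z => (g : Config A → ℂ) (F z) * ((g : Config A → ℂ) z)⁻¹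
      with hψdef
    have hψm : AEStronglyMeasurable ψ μ := by
      have h1 : AEStronglyMeasurable (fun z => (g : Config A → ℂ) (F z)) μ :=
        gm.comp_quasiMeasurePreserving hFmp.quasiMeasurePreserving
      exact h1.mul ((gm.aemeasurable.inv).aestronglyMeasurable)
    have hcF : ∀ᵐ z ∂μ, (g : Config A → ℂ) (shift (F z)) = c * (g : Config A → ℂ) (F z) :=
      hFmp.quasiMeasurePreserving.ae hc
    have hψinv : ψ ∘ shift =ᵐ[μ] ψ := by
      filter_upwards [hc, hcF] with z h1 h2
      have hcomm : F (shift z) = shift (F z) := congrFun hFshift z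
      have hX : ∀ a : ℂ, c * a * c⁻¹ = a := fun a => by
        rw [mul_right_comm, mul_inv_cancel₀ hcne, one_mul]
      simp only [hψdef, Function.comp_apply]
      rw [hcomm, h1, h2, mul_inv, ← mul_assoc, hX]
    obtain ⟨d, hd⟩ := hσerg.ae_eq_const_of_ae_eq_comp_ae hψm hψinv
    refine ⟨d, ?_⟩
    filter_upwards [hd, hgnz] with z h1 h2
    have h3 : (g : Config A → ℂ) (F z) * ((g : Config A → ℂ) z)⁻¹ = d := h1
    rw [← div_eq_mul_inv, div_eq_iff h2] at h3
    rw [h3, mul_comm]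
  unfold HasDiscreteSpectrum at *
  rw [eq_top_iff, ← hσds]
  exact Submodule.topologicalClosure_mono (Submodule.span_mono hsub)
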